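/- Let p₀ := 5^{−1/4}. For every p ∈ [−1,1] the functions μ₁, …, μ₅ order as follows: μ₂(p) = max{μ₁(p),…,μ₅(p)} and μ₃(p) = min{μ₁(p),…,μ₅(p)}; moreover, denoting by λ₁(p) ≥ λ₂(p) ≥ λ₃(p) ≥ λ₄(p) ≥ λ₅(p) the values μ₁(p),…,μ₅(p) arranged in non-increasing order, one has: λ₂(p) = μ₄(p) for p ∈ [−1, p₀] and λ₂(p) = μ₁(p) for p ∈ [p₀, 1]; λ₃(p) = μ₅(p) for p ∈ [−1, −p₀], λ₃(p) = μ₁(p) for p ∈ [−p₀, p₀], and λ₃(p) = μ₄(p) for p ∈ [p₀, 1]; λ₄(p) = μ₁(p) for p ∈ [−1, −p₀] and λ₄(p) = μ₅(p) for p ∈ [−p₀, 1]. -/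

import Mathlib

noncomputable section

def mu1 (p : ℝ) : ℝ := 3*p*(p^2+1)/4
def mu2 (p : ℝ) : ℝ := (3*p*(p^2-5) + 6*Real.sqrt (12-3*p^2))/4
def mu3 (p : ℝ) : ℝ := (3*p*(p^2-5) - 6*Real.sqrt (12-3*p^2))/4
def mu4 (p : ℝ) : ℝ :=
  (27*p*(p^2-3) + 3*Real.sqrt (105*p^6-630*p^4+945*p^2+64))/16
def mu5 (p : ℝ) : ℝ :=
  (27*p*(p^2-3) - 3*Real.sqrt (105*p^6-630*p^4+945*p^2+64))/16

/-- `p₀ = 5^{−1/4}`. -/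
def p0 : ℝ := (5 : ℝ) ^ (-(1/4) : ℝ)

lemma p0_pos : 0 < p0 := Real.rpow_pos_of_pos (by norm_num) _

lemma p0_lt_one : p0 < 1 :=
  Real.rpow_lt_one_of_one_lt_of_neg (by norm_num) (by norm_num)

lemma p0_pow : p0 ^ 4 = 1/5 := by
  rw [p0, ← Real.rpow_natCast ((5:ℝ) ^ (-(1/4):ℝ)) 4, ← Real.rpow_mul (by norm_num)]
  norm_num

section facts
variable {p : ℝ}

lemma hAfact (hp2 : p^2 ≤ 1) :
    3 ≤ Real.sqrt (12-3*p^2) ∧ (Real.sqrt (12-3*p^2))^2 = 12-3*p^2 := by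
  have h0 : (0:ℝ) ≤ 12-3*p^2 := by nlinarith
  have h2 := Real.sq_sqrt h0
  have h1 : 3 ≤ Real.sqrt (12-3*p^2) := by
    nlinarith [Real.sqrt_nonneg (12-3*p^2), h2]
  exact ⟨h1, h2⟩

lemma hBfact :
    0 ≤ Real.sqrt (105*p^6-630*p^4+945*p^2+64) ∧
    (Real.sqrt (105*p^6-630*p^4+945*p^2+64))^2 = 105*p^6-630*p^4+945*p^2+64 := by
  have h0 : (0:ℝ) ≤ 105*p^6-630*p^4+945*p^2+64 := by
    nlinarith [mul_nonneg (sq_nonneg p) (sq_nonneg (p^2-3))]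
  exact ⟨Real.sqrt_nonneg _, Real.sq_sqrt h0⟩

lemma L1 (hp2 : p^2 ≤ 1) (hp1 : p ≤ 1) : mu1 p ≤ mu2 p := by
  obtain ⟨h3, _⟩ := hAfact hp2
  unfold mu1 mu2
  nlinarith [h3]

lemma L2 (hp2 : p^2 ≤ 1) : mu4 p ≤ mu2 p := by
  obtain ⟨hs3, hs2⟩ := hAfact hp2
  obtain ⟨htnn, ht2⟩ := hBfact (p := p)
  set s := Real.sqrt (12-3*p^2) with hsdef
  set t := Real.sqrt (105*p^6-630*p^4+945*p^2+64) with htdef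
  have hpm : -1 ≤ p ∧ p ≤ 1 := abs_le.mp (abs_le_one_iff_mul_self_le_one.mpr (by nlinarith))
  have hL : 0 ≤ 8*s + 7*p - 5*p^3 := by
    nlinarith [hpm.1, hpm.2, sq_nonneg (p-1), sq_nonneg (p+1)]
  have hpolynn : (6:ℝ) ≤ -5*p^6+35*p^4-68*p^2+44 := by
    nlinarith [mul_nonneg (sub_nonneg.mpr hp2) (show (0:ℝ) ≤ 5*p^4-30*p^2+38 by nlinarith)]
  have hg : 0 ≤ -5*p^6+35*p^4-68*p^2+44 + s*(p*(7-5*p^2)) := by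
    rcases le_or_gt 0 p with hp | hp
    · have : 0 ≤ s*(p*(7-5*p^2)) :=
        mul_nonneg (by linarith) (mul_nonneg hp (by nlinarith))
      linarith
    · set R := s*((-p)*(7-5*p^2)) with hRdef
      have hRsq : R^2 = (12-3*p^2)*(p^2*(7-5*p^2)^2) := by
        rw [hRdef]; linear_combination (p^2*(7-5*p^2)^2) * hs2
      have hD : R^2 ≤ (-5*p^6+35*p^4-68*p^2+44)^2 := by
        rw [hRsq]
        nlinarith [sq_nonneg (p^2-1), sq_nonneg (1055*p^2-1350), sq_nonneg p,
          mul_nonneg (mul_nonneg (sq_nonneg p) (sq_nonneg p)) (sub_nonneg.mpr hp2),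
          mul_nonneg (sq_nonneg (p^2-1))
            (mul_nonneg (mul_nonneg (sq_nonneg p) (sq_nonneg p)) (sub_nonneg.mpr hp2)),
          mul_nonneg (sq_nonneg (p^2-1)) (sq_nonneg (1055*p^2-1350)),
          mul_nonneg (sq_nonneg (p^2-1)) (mul_nonneg (sq_nonneg p) (sub_nonneg.mpr hp2))]
      have hRle : R ≤ -5*p^6+35*p^4-68*p^2+44 :=
        le_of_pow_le_pow_left₀ two_ne_zero (by linarith) hD
      have : s*(p*(7-5*p^2)) = -R := by rw [hRdef]; ring
      linarith
  have hsq : t^2 ≤ (8*s + 7*p - 5*p^3)^2 := by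
    have hid : (8*s + 7*p - 5*p^3)^2 - (105*p^6-630*p^4+945*p^2+64)
        = 16*(-5*p^6+35*p^4-68*p^2+44 + s*(p*(7-5*p^2))) := by
      linear_combination (64:ℝ) * hs2
    nlinarith [hg, ht2]
  have hkey : t ≤ 8*s + 7*p - 5*p^3 := le_of_pow_le_pow_left₀ two_ne_zero hL hsq
  unfold mu2 mu4
  rw [← hsdef, ← htdef]
  linarith

lemma L5 (hp2 : p^2 ≤ 1) (hge : p0 ≤ p) : mu4 p ≤ mu1 p := by
  obtain ⟨htnn, ht2⟩ := hBfact (p := p)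
  set t := Real.sqrt (105*p^6-630*p^4+945*p^2+64) with htdef
  have hp0 : (0:ℝ) ≤ p := le_trans p0_pos.le hge
  have hp4 : 1/5 ≤ p^4 := by
    calc (1/5 : ℝ) = p0^4 := p0_pow.symm
    _ ≤ p^4 := pow_le_pow_left₀ p0_pos.le hge 4
  have hc : 0 ≤ 31*p - 5*p^3 := by nlinarith
  have hsq : t^2 ≤ (31*p - 5*p^3)^2 := by
    have : (31*p-5*p^3)^2 - (105*p^6-630*p^4+945*p^2+64) = 16*(5*p^4-1)*(4-p^2) := by ring
    nlinarith [mul_nonneg (by linarith : (0:ℝ) ≤ 5*p^4-1) (by nlinarith : (0:ℝ) ≤ 4-p^2), ht2]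
  have hkey : t ≤ 31*p - 5*p^3 := le_of_pow_le_pow_left₀ two_ne_zero hc hsq
  unfold mu1 mu4
  rw [← htdef]
  linarith

lemma L4 (hp2 : p^2 ≤ 1) (hle : p ≤ p0) : mu1 p ≤ mu4 p := by
  obtain ⟨htnn, ht2⟩ := hBfact (p := p)
  set t := Real.sqrt (105*p^6-630*p^4+945*p^2+64) with htdef
  have hkey : 31*p - 5*p^3 ≤ t := by
    rcases le_or_gt p 0 with hp | hp
    · have : 31*p - 5*p^3 ≤ 0 := by nlinarith
      linarith
    · have hp4 : p^4 ≤ 1/5 := by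
        calc p^4 ≤ p0^4 := pow_le_pow_left₀ hp.le hle 4
        _ = 1/5 := p0_pow
      have hsq : (31*p - 5*p^3)^2 ≤ t^2 := by
        have : (31*p-5*p^3)^2 - (105*p^6-630*p^4+945*p^2+64) = 16*(5*p^4-1)*(4-p^2) := by ring
        nlinarith [mul_nonneg (by linarith : (0:ℝ) ≤ 1-5*p^4) (by nlinarith : (0:ℝ) ≤ 4-p^2), ht2]
      exact le_of_pow_le_pow_left₀ two_ne_zero htnn hsq
  unfold mu1 mu4
  rw [← htdef]
  linarith

lemma L3 : mu5 p ≤ mu4 p := by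
  unfold mu4 mu5
  have := Real.sqrt_nonneg (105*p^6-630*p^4+945*p^2+64)
  linarith

lemma mu1_neg : mu1 (-p) = -(mu1 p) := by unfold mu1; ring

lemma mu2_neg : mu2 (-p) = -(mu3 p) := by
  unfold mu2 mu3
  rw [show (12-3*(-p)^2 : ℝ) = 12-3*p^2 by ring]
  ring

lemma mu4_neg : mu4 (-p) = -(mu5 p) := by
  unfold mu4 mu5
  rw [show (105*(-p)^6-630*(-p)^4+945*(-p)^2+64 : ℝ) = 105*p^6-630*p^4+945*p^2+64 by ring]
  ring

end facts

lemma sorted_eq {a b c d e : ℝ} (Λ : Fin 5 → ℝ) (hΛ : Antitone Λ)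
    (hab : b ≤ a) (hbc : c ≤ b) (hcd : d ≤ c) (hde : e ≤ d)
    (h : ({a,b,c,d,e} : Multiset ℝ) = Multiset.map Λ Finset.univ.val) :
    Λ 0 = a ∧ Λ 1 = b ∧ Λ 2 = c ∧ Λ 3 = d ∧ Λ 4 = e := by
  have h2 : (↑[a,b,c,d,e] : Multiset ℝ) = ↑[Λ 0, Λ 1, Λ 2, Λ 3, Λ 4] := h
  have hperm := Multiset.coe_eq_coe.mp h2
  have s1 : List.Pairwise (· ≥ ·) [a,b,c,d,e] := List.isChain_iff_pairwise.mp (by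
    simp only [List.isChain_cons_cons, List.isChain_singleton, and_true, ge_iff_le]
    exact ⟨hab, hbc, hcd, hde⟩)
  have s2 : List.Pairwise (· ≥ ·) [Λ 0, Λ 1, Λ 2, Λ 3, Λ 4] := List.isChain_iff_pairwise.mp (by
    simp only [List.isChain_cons_cons, List.isChain_singleton, and_true, ge_iff_le]
    exact ⟨hΛ (by decide), hΛ (by decide), hΛ (by decide), hΛ (by decide)⟩)
  have heq := List.Perm.eq_of_pairwise (fun _ _ _ _ h1 h2 => le_antisymm h2 h1) s1 s2 hperm
  simp only [List.cons.injEq, and_true] at heq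
  exact ⟨heq.1.symm, heq.2.1.symm, heq.2.2.1.symm, heq.2.2.2.1.symm, heq.2.2.2.2.symm⟩

/-- Ordering of the eigenvalue branches `μ₁, …, μ₅` on `[−1, 1]`: if
`Λ 0 ≥ Λ 1 ≥ … ≥ Λ 4` enumerates the values `μ₁(p), …, μ₅(p)` in
non-increasing order, then the top and bottom values are always `μ₂(p)` and
`μ₃(p)`, while the middle ones switch branches at `±p₀`. -/
theorem mu_ordering (p : ℝ) (hp : p ∈ Set.Icc (-1:ℝ) 1)
    (Λ : Fin 5 → ℝ) (hΛanti : Antitone Λ)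
    (hΛ : ({mu1 p, mu2 p, mu3 p, mu4 p, mu5 p} : Multiset ℝ) =
      Multiset.map Λ Finset.univ.val) :
    Λ 0 = mu2 p ∧ Λ 4 = mu3 p ∧
    (p ≤ p0 → Λ 1 = mu4 p) ∧ (p0 ≤ p → Λ 1 = mu1 p) ∧
    (p ≤ -p0 → Λ 2 = mu5 p) ∧ (-p0 ≤ p → p ≤ p0 → Λ 2 = mu1 p) ∧
    (p0 ≤ p → Λ 2 = mu4 p) ∧
    (p ≤ -p0 → Λ 3 = mu1 p) ∧ (-p0 ≤ p → Λ 3 = mu5 p) := by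
  obtain ⟨hpl, hpr⟩ := hp
  have hp2 : p^2 ≤ 1 := by nlinarith
  have hnp2 : (-p)^2 ≤ 1 := by nlinarith
  have hp0 := p0_pos
  have h21 : mu1 p ≤ mu2 p := L1 hp2 hpr
  have h24 : mu4 p ≤ mu2 p := L2 hp2
  have h45 : mu5 p ≤ mu4 p := L3
  have h31 : mu3 p ≤ mu1 p := by
    have := L1 hnp2 (by linarith : -p ≤ 1)
    rw [mu1_neg, mu2_neg] at this; linarith
  have h35 : mu3 p ≤ mu5 p := by
    have := L2 hnp2
    rw [mu2_neg, mu4_neg] at this; linarith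
  rcases le_or_gt p (-p0) with hR1 | hR1
  · -- region p ≤ -p₀ : order μ2 ≥ μ4 ≥ μ5 ≥ μ1 ≥ μ3
    have h51 : mu1 p ≤ mu5 p := by
      have := L5 hnp2 (by linarith : p0 ≤ -p)
      rw [mu1_neg, mu4_neg] at this; linarith
    have h' : ({mu2 p, mu4 p, mu5 p, mu1 p, mu3 p} : Multiset ℝ)
        = Multiset.map Λ Finset.univ.val := by
      rw [← hΛ]; simp only [Multiset.insert_eq_cons, ← Multiset.singleton_add]; ac_rfl
    obtain ⟨e0, e1, e2, e3, e4⟩ := sorted_eq Λ hΛanti h24 h45 h51 h31 h'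
    have h15 : -p0 ≤ p → mu5 p ≤ mu1 p := by
      intro h
      have := L4 hnp2 (by linarith : -p ≤ p0)
      rw [mu1_neg, mu4_neg] at this; linarith
    refine ⟨e0, e4, fun _ => e1, ?_, fun _ => e2, ?_, ?_, fun _ => e3, ?_⟩
    · intro h; exfalso; linarith
    · intro h _; rw [e2]; linarith [h15 h]
    · intro h; exfalso; linarith
    · intro h; rw [e3]; linarith [h15 h]
  · rcases le_or_gt p p0 with hR2 | hR2
    · -- region -p₀ < p ≤ p₀ : order μ2 ≥ μ4 ≥ μ1 ≥ μ5 ≥ μ3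
      have h14 : mu1 p ≤ mu4 p := L4 hp2 hR2
      have h15 : mu5 p ≤ mu1 p := by
        have := L4 hnp2 (by linarith : -p ≤ p0)
        rw [mu1_neg, mu4_neg] at this; linarith
      have h' : ({mu2 p, mu4 p, mu1 p, mu5 p, mu3 p} : Multiset ℝ)
          = Multiset.map Λ Finset.univ.val := by
        rw [← hΛ]; simp only [Multiset.insert_eq_cons, ← Multiset.singleton_add]; ac_rfl
      obtain ⟨e0, e1, e2, e3, e4⟩ := sorted_eq Λ hΛanti h24 h14 h15 h35 h'
      refine ⟨e0, e4, fun _ => e1, ?_, ?_, fun _ _ => e2, ?_, ?_, fun _ => e3⟩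
      · intro h; rw [e1]; linarith [L5 hp2 h]
      · intro h; exfalso; linarith
      · intro h; rw [e2]; linarith [L5 hp2 h]
      · intro h; exfalso; linarith
    · -- region p₀ < p : order μ2 ≥ μ1 ≥ μ4 ≥ μ5 ≥ μ3
      have h41 : mu4 p ≤ mu1 p := L5 hp2 hR2.le
      have h' : ({mu2 p, mu1 p, mu4 p, mu5 p, mu3 p} : Multiset ℝ)
          = Multiset.map Λ Finset.univ.val := by
        rw [← hΛ]; simp only [Multiset.insert_eq_cons, ← Multiset.singleton_add]; ac_rfl
      obtain ⟨e0, e1, e2, e3, e4⟩ := sorted_eq Λ hΛanti h21 h41 h45 h35 h'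
      refine ⟨e0, e4, ?_, fun _ => e1, ?_, ?_, fun _ => e2, ?_, fun _ => e3⟩
      · intro h; exfalso; linarith
      · intro h; exfalso; linarith
      · intro _ h; exfalso; linarith
      · intro h; exfalso; linarith
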